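/- Let {p_t(a)}_{t∈[0,1]} be a family of probability distributions on a finite set 𝒜, given as the mixture p_t(a | c) = Σ_{a₁} p_{t|1}(a | a₁) p_data(a₁ | c), where for each a₁ the conditional flow satisfies the Kolmogorov equation ∂_t p_{t|1}(· | a₁) = p_{t|1}(· | a₁) R_{t|1}(·,· | a₁). Then the mixture satisfies ∂_t p_t(· | c) = p_t(· | c) R_t(·,· | c) with the guided rate matrix R_t(a, b | c) = E_{a₁ ∼ p_{1|t}(·|a, c)}[R_{t|1}(a, b | a₁)], where p_{1|t}(a₁ | a, c) ∝ p_{t|1}(a | a₁) p_data(a₁ | c), provided p_t(a | c) > 0. -/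

import Mathlib

/-- **Guided rate matrix generates the guided marginal flow (finite state
space).** If each conditional flow `p_{t|1}(·|a₁)` satisfies the Kolmogorov
equation `∂_t p_{t|1} = p_{t|1} R_{t|1}(·,·|a₁)`, then the mixture
`p_t(a|c) = Σ_{a₁} p_{t|1}(a|a₁) p_data(a₁|c)` satisfies
`∂_t p_t(·|c) = p_t(·|c) R_t(·,·|c)` with the guided rate matrix
`R_t(a,b|c) = E_{a₁ ∼ p_{1|t}(·|a,c)}[R_{t|1}(a,b|a₁)]`, where
`p_{1|t}(a₁|a,c) = p_{t|1}(a|a₁) p_data(a₁|c) / p_t(a|c)`, provided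
`p_t(a|c) > 0`. -/
theorem guided_rate_matrix_generates_mixture
    {A : Type*} [Fintype A] [DecidableEq A]
    (pcond : ℝ → A → A → ℝ)       -- p_{t|1}(a | a₁)
    (Rcond : ℝ → A → A → A → ℝ)   -- (t, a, b, a₁) ↦ R_{t|1}(a, b | a₁)
    (pdata : A → ℝ)               -- p_data(a₁ | c), for the fixed target c
    (hprob0 : ∀ t a₁ a, 0 ≤ pcond t a a₁)
    (hprob1 : ∀ t a₁, ∑ a, pcond t a a₁ = 1)
    (hrate_nonneg : ∀ t a₁ a b, a ≠ b → 0 ≤ Rcond t a b a₁)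
    (hrate_rowsum : ∀ t a₁ a, ∑ b, Rcond t a b a₁ = 0)
    (hpdata0 : ∀ a₁, 0 ≤ pdata a₁)
    (hpdata1 : ∑ a₁, pdata a₁ = 1)
    -- Kolmogorov equation for each conditional flow:
    (hK : ∀ t a₁ b, HasDerivAt (fun s => pcond s b a₁)
      (∑ a, pcond t a a₁ * Rcond t a b a₁) t)
    (t : ℝ) (b : A)
    (hpos : ∀ a, 0 < ∑ a₁, pcond t a a₁ * pdata a₁) :
    HasDerivAt (fun s => ∑ a₁, pcond s b a₁ * pdata a₁)
      (∑ a, (∑ a₁, pcond t a a₁ * pdata a₁) *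
        (∑ a₁, (pcond t a a₁ * pdata a₁ / (∑ a₁', pcond t a a₁' * pdata a₁'))
          * Rcond t a b a₁)) t := by
  have h := HasDerivAt.fun_sum (fun a₁ (_ : a₁ ∈ Finset.univ) =>
    (hK t a₁ b).mul_const (pdata a₁))
  refine h.congr_deriv (Eq.symm ?_)
  simp_rw [Finset.mul_sum, Finset.sum_mul]
  rw [Finset.sum_comm]
  refine Finset.sum_congr rfl fun a₁ _ => Finset.sum_congr rfl fun a _ => ?_
  have hS := (hpos a).ne'
  have key : ∀ x r S : ℝ, S ≠ 0 → S * (x / S * r) = x * r := by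
    intro x r S h0; field_simp
  rw [← Finset.sum_mul, key _ _ _ hS]; ring
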